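/- In the homogenized Weyl algebra H (the coordinate ring of the canonical family Q_{𝔸¹}Ω_{𝔸ⁿ} of deformation quantizations of the cotangent bundle of 𝔸ⁿ), no nonzero element is annihilated, from the left or from the right, by a nonzero polynomial in the central element ƛ: for every nonzero q ∈ Polynomial ℂ and every h ∈ H, if (Polynomial.aeval ƛ q) * h = 0 or h * (Polynomial.aeval ƛ q) = 0, then h = 0. (Property (3) of the canonical family in Section 5.2: Q_{𝔸¹}Ω_W is a flat family over 𝔸¹ = Spec ℂ[λ].) -/

import Mathlib

/-- The generator `Xᵢ` of the free algebra `F = FreeAlgebra ℂ ((Fin n ⊕ Fin n) ⊕ Unit)`. -/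
noncomputable def fwX (n : ℕ) (i : Fin n) : FreeAlgebra ℂ ((Fin n ⊕ Fin n) ⊕ Unit) :=
  FreeAlgebra.ι ℂ (Sum.inl (Sum.inl i))

/-- The generator `Pᵢ` of the free algebra `F`. -/
noncomputable def fwP (n : ℕ) (i : Fin n) : FreeAlgebra ℂ ((Fin n ⊕ Fin n) ⊕ Unit) :=
  FreeAlgebra.ι ℂ (Sum.inl (Sum.inr i))

/-- The generator `Λ` of the free algebra `F`. -/
noncomputable def fwL (n : ℕ) : FreeAlgebra ℂ ((Fin n ⊕ Fin n) ⊕ Unit) :=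
  FreeAlgebra.ι ℂ (Sum.inr Unit.unit)

/-- The defining relations of the homogenized Weyl algebra (the coordinate ring of
the canonical family `Q_{𝔸¹}Ω_{𝔸ⁿ}` of deformation quantizations of the cotangent
bundle of `𝔸ⁿ`, Section 5.2):
`[xᵢ,xⱼ] = 0`, `[pᵢ,pⱼ] = 0`, `[ƛ,xᵢ] = 0`, `[ƛ,pᵢ] = 0`,
`[pᵢ,xⱼ] = δᵢⱼ ƛ`. -/
inductive WeylRel (n : ℕ) :
    FreeAlgebra ℂ ((Fin n ⊕ Fin n) ⊕ Unit) →
    FreeAlgebra ℂ ((Fin n ⊕ Fin n) ⊕ Unit) → Prop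
  | xx (i j : Fin n) : WeylRel n (fwX n i * fwX n j) (fwX n j * fwX n i)
  | pp (i j : Fin n) : WeylRel n (fwP n i * fwP n j) (fwP n j * fwP n i)
  | lx (i : Fin n) : WeylRel n (fwL n * fwX n i) (fwX n i * fwL n)
  | lp (i : Fin n) : WeylRel n (fwL n * fwP n i) (fwP n i * fwL n)
  | px_same (i : Fin n) : WeylRel n (fwP n i * fwX n i) (fwX n i * fwP n i + fwL n)
  | px_ne (i j : Fin n) : i ≠ j → WeylRel n (fwP n i * fwX n j) (fwX n j * fwP n i)

/-- The homogenized Weyl algebra `H`. -/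
noncomputable abbrev HWeyl (n : ℕ) := RingQuot (WeylRel n)

/-- The element `x i` of `H`. -/
noncomputable def hx (n : ℕ) (i : Fin n) : HWeyl n :=
  RingQuot.mkAlgHom ℂ (WeylRel n) (fwX n i)

/-- The element `p i` of `H`. -/
noncomputable def hp (n : ℕ) (i : Fin n) : HWeyl n :=
  RingQuot.mkAlgHom ℂ (WeylRel n) (fwP n i)

/-- The central element `ƛ` of `H`. -/
noncomputable def hl (n : ℕ) : HWeyl n :=
  RingQuot.mkAlgHom ℂ (WeylRel n) (fwL n)

section WeylFlatAux

open MvPolynomial Finset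

variable (n : ℕ)

/-- The polynomial module on which `H` acts. -/
noncomputable abbrev WPol := MvPolynomial ((Fin n ⊕ Fin n) ⊕ Unit) ℂ

lemma pderiv_comm' {σ : Type*} (i j : σ) (f : MvPolynomial σ ℂ) :
    pderiv i (pderiv j f) = pderiv j (pderiv i f) := by
  induction f using MvPolynomial.induction_on' with
  | monomial s a =>
    classical
    simp only [pderiv_monomial]
    by_cases h : i = j
    · subst h; rfl
    · congr 1
      · rw [tsub_tsub, tsub_tsub, add_comm]
      · rw [Finsupp.tsub_apply, Finsupp.tsub_apply,
          Finsupp.single_eq_of_ne h, Finsupp.single_eq_of_ne (Ne.symm h)]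
        simp only [tsub_zero]
        ring
  | add p q hp hq => simp [hp, hq]

/-- The action of the generators: `x i` acts by multiplication by the variable `xᵢ`,
`ƛ` by multiplication by the variable `λ`, and `p i` by `ξᵢ·(mult) + λ ∂/∂xᵢ`. -/
noncomputable def wop : (Fin n ⊕ Fin n) ⊕ Unit → Module.End ℂ (WPol n)
  | .inl (.inl i) => LinearMap.mulLeft ℂ (X (.inl (.inl i)))
  | .inl (.inr i) => LinearMap.mulLeft ℂ (X (.inl (.inr i)))
      + LinearMap.mulLeft ℂ (X (.inr ())) ∘ₗ (pderiv (.inl (.inl i))).toLinearMap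
  | .inr _ => LinearMap.mulLeft ℂ (X (.inr ()))

lemma wop_rel : ∀ ⦃a b⦄, WeylRel n a b →
    FreeAlgebra.lift ℂ (wop n) a = FreeAlgebra.lift ℂ (wop n) b := by
  intro a b r
  cases r with
  | xx i j =>
    apply LinearMap.ext; intro f
    simp [fwX, wop, Module.End.mul_apply]
    ring
  | pp i j =>
    apply LinearMap.ext; intro f
    simp [fwP, wop, Module.End.mul_apply, pderiv_mul,
      pderiv_X_of_ne (show (Sum.inl (Sum.inr j) : (Fin n ⊕ Fin n) ⊕ Unit) ≠ Sum.inl (Sum.inl i) by simp),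
      pderiv_X_of_ne (show (Sum.inl (Sum.inr i) : (Fin n ⊕ Fin n) ⊕ Unit) ≠ Sum.inl (Sum.inl j) by simp),
      pderiv_X_of_ne (show (Sum.inr () : (Fin n ⊕ Fin n) ⊕ Unit) ≠ Sum.inl (Sum.inl i) by simp),
      pderiv_X_of_ne (show (Sum.inr () : (Fin n ⊕ Fin n) ⊕ Unit) ≠ Sum.inl (Sum.inl j) by simp)]
    rw [pderiv_comm']
    ring
  | lx i =>
    apply LinearMap.ext; intro f
    simp [fwX, fwL, wop, Module.End.mul_apply]
    ring
  | lp i =>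
    apply LinearMap.ext; intro f
    simp [fwP, fwL, wop, Module.End.mul_apply, pderiv_mul,
      pderiv_X_of_ne (show (Sum.inr () : (Fin n ⊕ Fin n) ⊕ Unit) ≠ Sum.inl (Sum.inl i) by simp)]
    ring
  | px_same i =>
    apply LinearMap.ext; intro f
    simp [fwX, fwP, fwL, wop, Module.End.mul_apply, pderiv_mul]
    ring
  | px_ne i j hij =>
    apply LinearMap.ext; intro f
    simp [fwX, fwP, wop, Module.End.mul_apply, pderiv_mul,
      pderiv_X_of_ne (show (Sum.inl (Sum.inl j) : (Fin n ⊕ Fin n) ⊕ Unit) ≠ Sum.inl (Sum.inl i) by simp [hij.symm])]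
    ring

/-- The representation of `H` on the polynomial ring. -/
noncomputable def wrep : HWeyl n →ₐ[ℂ] Module.End ℂ (WPol n) :=
  RingQuot.liftAlgHom ℂ ⟨FreeAlgebra.lift ℂ (wop n), wop_rel n⟩

lemma wrep_hx (i : Fin n) : wrep n (hx n i) = LinearMap.mulLeft ℂ (X (.inl (.inl i))) := by
  rw [wrep, hx, RingQuot.liftAlgHom_mkAlgHom_apply, fwX, FreeAlgebra.lift_ι_apply, wop]

lemma wrep_hp (i : Fin n) : wrep n (hp n i) = LinearMap.mulLeft ℂ (X (.inl (.inr i)))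
      + LinearMap.mulLeft ℂ (X (.inr ())) ∘ₗ (pderiv (.inl (.inl i))).toLinearMap := by
  rw [wrep, hp, RingQuot.liftAlgHom_mkAlgHom_apply, fwP, FreeAlgebra.lift_ι_apply, wop]

lemma wrep_hl : wrep n (hl n) = LinearMap.mulLeft ℂ (X (.inr ())) := by
  rw [wrep, hl, RingQuot.liftAlgHom_mkAlgHom_apply, fwL, FreeAlgebra.lift_ι_apply, wop]

lemma hx_comm (i j : Fin n) : Commute (hx n i) (hx n j) := by
  have := RingQuot.mkAlgHom_rel ℂ (WeylRel.xx (n := n) i j)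
  simp only [map_mul] at this
  exact this

lemma hp_comm (i j : Fin n) : Commute (hp n i) (hp n j) := by
  have := RingQuot.mkAlgHom_rel ℂ (WeylRel.pp (n := n) i j)
  simp only [map_mul] at this
  exact this

lemma hl_hx (i : Fin n) : hl n * hx n i = hx n i * hl n := by
  have := RingQuot.mkAlgHom_rel ℂ (WeylRel.lx (n := n) i)
  simp only [map_mul] at this
  exact this

lemma hl_hp (i : Fin n) : hl n * hp n i = hp n i * hl n := by
  have := RingQuot.mkAlgHom_rel ℂ (WeylRel.lp (n := n) i)
  simp only [map_mul] at this
  exact this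

lemma hp_hx_same (i : Fin n) : hp n i * hx n i = hx n i * hp n i + hl n := by
  have := RingQuot.mkAlgHom_rel ℂ (WeylRel.px_same (n := n) i)
  simp only [map_mul, map_add] at this
  exact this

lemma hp_hx_ne {i j : Fin n} (h : i ≠ j) : hp n i * hx n j = hx n j * hp n i := by
  have := RingQuot.mkAlgHom_rel ℂ (WeylRel.px_ne (n := n) i j h)
  simp only [map_mul] at this
  exact this

lemma hl_central (g : HWeyl n) : Commute (hl n) g := by
  obtain ⟨z, rfl⟩ := RingQuot.mkAlgHom_surjective ℂ (WeylRel n) g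
  induction z using FreeAlgebra.induction with
  | grade0 r => rw [AlgHom.commutes]; exact (Algebra.commutes r (hl n)).symm
  | grade1 v =>
    rcases v with (i | i) | u
    · exact hl_hx n i
    · exact hl_hp n i
    · cases u; exact Commute.refl _
  | mul a b ha hb => rw [map_mul]; exact ha.mul_right hb
  | add a b ha hb => rw [map_add]; exact ha.add_right hb

section cpow

variable {A : Type*} [Monoid A] {m : ℕ} (f : Fin m → A) (hf : ∀ j k, Commute (f j) (f k))

/-- Ordered product of commuting powers. -/
noncomputable def cpow (a : Fin m → ℕ) : A :=
  Finset.univ.noncommProd (fun j => f j ^ a j)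
    (fun j _ k _ _ => (hf j k).pow_pow _ _)

lemma commute_cpow (y : A) (h : ∀ j, Commute y (f j)) (a : Fin m → ℕ) :
    Commute y (cpow f hf a) :=
  Finset.noncommProd_commute _ _ _ _ (fun j _ => (h j).pow_right _)

lemma cpow_zero' (a : Fin m → ℕ) (h : ∀ j, a j = 0) : cpow f hf a = 1 := by
  refine Finset.noncommProd_induction _ _ _ (· = 1)
    (fun a b ha hb => by rw [ha, hb, one_mul]) rfl (fun x _ => by rw [h, pow_zero])

lemma cpow_split (a : Fin m → ℕ) (i : Fin m) :
    cpow f hf a = f i ^ a i *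
      (Finset.univ.erase i).noncommProd (fun j => f j ^ a j)
        (fun j _ k _ _ => (hf j k).pow_pow _ _) :=
  (Finset.mul_noncommProd_erase _ (Finset.mem_univ i) _ _).symm

lemma erase_prod_congr (a : Fin m → ℕ) (i : Fin m) (b : Fin m → ℕ)
    (hab : ∀ j, j ≠ i → a j = b j) :
    (Finset.univ.erase i).noncommProd (fun j => f j ^ a j)
        (fun j _ k _ _ => (hf j k).pow_pow _ _) =
      (Finset.univ.erase i).noncommProd (fun j => f j ^ b j)
        (fun j _ k _ _ => (hf j k).pow_pow _ _) := by
  refine Finset.noncommProd_congr rfl (fun j hj => ?_) _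
  rw [hab j (Finset.ne_of_mem_erase hj)]

lemma mul_cpow (a : Fin m → ℕ) (i : Fin m) :
    f i * cpow f hf a = cpow f hf (Function.update a i (a i + 1)) := by
  rw [cpow_split f hf a i, cpow_split f hf _ i, ← mul_assoc, ← pow_succ',
    Function.update_self,
    erase_prod_congr f hf (Function.update a i (a i + 1)) i a
      (fun j hj => by rw [Function.update_of_ne hj])]

end cpow

/-- Ordered monomial `x^a`. -/
noncomputable def xpow (a : Fin n → ℕ) : HWeyl n := cpow (hx n) (hx_comm n) a

/-- Ordered monomial `p^b`. -/
noncomputable def ppow (b : Fin n → ℕ) : HWeyl n := cpow (hp n) (hp_comm n) b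

/-- The PBW monomial `x^a p^b ƛ^c` associated to a multidegree `d`. -/
noncomputable def monH (d : ((Fin n ⊕ Fin n) ⊕ Unit) →₀ ℕ) : HWeyl n :=
  xpow n (fun i => d (.inl (.inl i))) * (ppow n (fun i => d (.inl (.inr i))) * hl n ^ d (.inr ()))

lemma hp_hxpow_succ (i : Fin n) (k : ℕ) :
    hp n i * hx n i ^ (k + 1) = hx n i ^ (k + 1) * hp n i + (k + 1) • (hx n i ^ k * hl n) := by
  induction k with
  | zero => simpa using hp_hx_same n i
  | succ k ih =>
    calc hp n i * hx n i ^ (k + 2) = (hp n i * hx n i ^ (k + 1)) * hx n i := by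
          rw [pow_succ, mul_assoc]
      _ = (hx n i ^ (k + 1) * hp n i) * hx n i + (k + 1) • ((hx n i ^ k * hl n) * hx n i) := by
          rw [ih, add_mul, smul_mul_assoc]
      _ = hx n i ^ (k + 1) * (hx n i * hp n i + hl n)
            + (k + 1) • (hx n i ^ (k + 1) * hl n) := by
          rw [mul_assoc, hp_hx_same, mul_assoc, hl_hx, ← mul_assoc, ← pow_succ]
      _ = hx n i ^ (k + 2) * hp n i + (k + 2) • (hx n i ^ (k + 1) * hl n) := by
          rw [mul_add, ← mul_assoc, ← pow_succ, succ_nsmul (hx n i ^ (k+1) * hl n) (k+1)]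
          abel

lemma hp_hxpow (i : Fin n) (k : ℕ) :
    hp n i * hx n i ^ k = hx n i ^ k * hp n i + k • (hx n i ^ (k - 1) * hl n) := by
  cases k with
  | zero => simp
  | succ k => simpa using hp_hxpow_succ n i k

lemma hp_xpow (i : Fin n) (a : Fin n → ℕ) :
    hp n i * xpow n a = xpow n a * hp n i
      + a i • (xpow n (Function.update a i (a i - 1)) * hl n) := by
  classical
  set R := (Finset.univ.erase i).noncommProd (fun j => hx n j ^ a j)
    (fun j _ k _ _ => ((hx_comm n j k)).pow_pow _ _) with hRdef
  have hsplit : xpow n a = hx n i ^ a i * R := cpow_split (hx n) (hx_comm n) a i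
  have hsplit' : xpow n (Function.update a i (a i - 1)) = hx n i ^ (a i - 1) * R := by
    rw [xpow, cpow_split (hx n) (hx_comm n) _ i, Function.update_self,
      erase_prod_congr (hx n) (hx_comm n) (Function.update a i (a i - 1)) i a
        (fun j hj => by rw [Function.update_of_ne hj])]
  have hR : Commute (hp n i) R :=
    Finset.noncommProd_commute _ _ _ _
      (fun j hj => (show Commute (hp n i) (hx n j) from
        hp_hx_ne n (Ne.symm (Finset.ne_of_mem_erase hj))).pow_right _)
  have hRl : Commute (hl n) R := hl_central n R
  calc hp n i * xpow n a = (hp n i * hx n i ^ a i) * R := by rw [hsplit, mul_assoc]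
    _ = (hx n i ^ a i * hp n i) * R + a i • ((hx n i ^ (a i - 1) * hl n) * R) := by
        rw [hp_hxpow, add_mul, smul_mul_assoc]
    _ = (hx n i ^ a i * R) * hp n i + a i • ((hx n i ^ (a i - 1) * R) * hl n) := by
        rw [mul_assoc, hR.eq, ← mul_assoc, mul_assoc (hx n i ^ (a i - 1)), hRl.eq,
          ← mul_assoc]
    _ = xpow n a * hp n i + a i • (xpow n (Function.update a i (a i - 1)) * hl n) := by
        rw [← hsplit, ← hsplit']

lemma mul_xpow (i : Fin n) (a : Fin n → ℕ) :
    hx n i * xpow n a = xpow n (Function.update a i (a i + 1)) :=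
  mul_cpow (hx n) (hx_comm n) a i

lemma mul_ppow (i : Fin n) (b : Fin n → ℕ) :
    hp n i * ppow n b = ppow n (Function.update b i (b i + 1)) :=
  mul_cpow (hp n) (hp_comm n) b i

lemma hx_mul_monH (i : Fin n) (d : ((Fin n ⊕ Fin n) ⊕ Unit) →₀ ℕ) :
    hx n i * monH n d = monH n (d + Finsupp.single (Sum.inl (Sum.inl i)) 1) := by
  classical
  have hxc : (fun j => (d + Finsupp.single (Sum.inl (Sum.inl i)) 1
        : ((Fin n ⊕ Fin n) ⊕ Unit) →₀ ℕ) (Sum.inl (Sum.inl j)))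
      = Function.update (fun j => d (Sum.inl (Sum.inl j))) i (d (Sum.inl (Sum.inl i)) + 1) := by
    funext j
    rcases eq_or_ne j i with rfl | hji
    · simp
    · simp [Finsupp.single_apply, hji.symm, Function.update_of_ne hji]
  have hpc : (fun j => (d + Finsupp.single (Sum.inl (Sum.inl i)) 1
        : ((Fin n ⊕ Fin n) ⊕ Unit) →₀ ℕ) (Sum.inl (Sum.inr j)))
      = fun j => d (Sum.inl (Sum.inr j)) := by
    funext j; simp [Finsupp.single_apply]
  have hlc : (d + Finsupp.single (Sum.inl (Sum.inl i)) 1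
        : ((Fin n ⊕ Fin n) ⊕ Unit) →₀ ℕ) (Sum.inr ()) = d (Sum.inr ()) := by
    simp [Finsupp.single_apply]
  rw [monH, monH, hxc, hpc, hlc, ← mul_assoc, mul_xpow]

lemma hl_mul_monH (d : ((Fin n ⊕ Fin n) ⊕ Unit) →₀ ℕ) :
    hl n * monH n d = monH n (d + Finsupp.single (Sum.inr ()) 1) := by
  classical
  have hxc : (fun j => (d + Finsupp.single (Sum.inr ()) 1
        : ((Fin n ⊕ Fin n) ⊕ Unit) →₀ ℕ) (Sum.inl (Sum.inl j)))
      = fun j => d (Sum.inl (Sum.inl j)) := by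
    funext j; simp [Finsupp.single_apply]
  have hpc : (fun j => (d + Finsupp.single (Sum.inr ()) 1
        : ((Fin n ⊕ Fin n) ⊕ Unit) →₀ ℕ) (Sum.inl (Sum.inr j)))
      = fun j => d (Sum.inl (Sum.inr j)) := by
    funext j; simp [Finsupp.single_apply]
  have hlc : (d + Finsupp.single (Sum.inr ()) 1
        : ((Fin n ⊕ Fin n) ⊕ Unit) →₀ ℕ) (Sum.inr ()) = d (Sum.inr ()) + 1 := by
    simp [Finsupp.single_apply]
  have c1 : Commute (hl n) (xpow n fun j => d (Sum.inl (Sum.inl j))) :=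
    commute_cpow (hx n) (hx_comm n) _ (fun j => hl_hx n j) _
  have c2 : Commute (hl n) (ppow n fun j => d (Sum.inl (Sum.inr j))) :=
    commute_cpow (hp n) (hp_comm n) _ (fun j => hl_hp n j) _
  rw [monH, monH, hxc, hpc, hlc, pow_succ']
  rw [← mul_assoc, c1.eq, mul_assoc, ← mul_assoc (hl n), c2.eq, mul_assoc]

lemma hp_mul_monH (i : Fin n) (d : ((Fin n ⊕ Fin n) ⊕ Unit) →₀ ℕ) :
    hp n i * monH n d
      = monH n (d + Finsupp.single (Sum.inl (Sum.inr i)) 1)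
        + d (Sum.inl (Sum.inl i)) •
          monH n (d - Finsupp.single (Sum.inl (Sum.inl i)) 1
            + Finsupp.single (Sum.inr ()) 1) := by
  classical
  set a : Fin n → ℕ := fun j => d (Sum.inl (Sum.inl j)) with ha
  set b : Fin n → ℕ := fun j => d (Sum.inl (Sum.inr j)) with hb
  set c : ℕ := d (Sum.inr ()) with hc
  have eA : monH n (d + Finsupp.single (Sum.inl (Sum.inr i)) 1)
      = xpow n a * (ppow n (Function.update b i (b i + 1)) * hl n ^ c) := by
    rw [monH]
    congr 1
    · congr 1
      funext j; simp [ha, Finsupp.single_apply]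
    · congr 2
      · funext j
        rcases eq_or_ne j i with rfl | hji
        · simp [hb]
        · simp [hb, Finsupp.single_apply, hji.symm, Function.update_of_ne hji]
      · simp [hc, Finsupp.single_apply]
  have eB : monH n (d - Finsupp.single (Sum.inl (Sum.inl i)) 1
        + Finsupp.single (Sum.inr ()) 1)
      = xpow n (Function.update a i (a i - 1)) * (ppow n b * hl n ^ (c + 1)) := by
    rw [monH]
    congr 1
    · congr 1
      funext j
      rcases eq_or_ne j i with rfl | hji
      · simp [ha, Finsupp.single_apply, Finsupp.tsub_apply]
      · simp [ha, Finsupp.single_apply, Finsupp.tsub_apply, hji.symm,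
          Function.update_of_ne hji]
    · congr 2
      · funext j; simp [hb, Finsupp.single_apply, Finsupp.tsub_apply]
      · simp [hc, Finsupp.single_apply, Finsupp.tsub_apply]
  rw [eA, eB, monH]
  have c2 : Commute (hl n) (ppow n b) :=
    commute_cpow (hp n) (hp_comm n) _ (fun j => hl_hp n j) _
  have t1 : (xpow n a * hp n i) * (ppow n b * hl n ^ c)
      = xpow n a * (hp n i * ppow n b * hl n ^ c) := by noncomm_ring
  have t2 : (xpow n (Function.update a i (a i - 1)) * hl n) * (ppow n b * hl n ^ c)
      = xpow n (Function.update a i (a i - 1)) * (ppow n b * (hl n * hl n ^ c)) := by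
    rw [mul_assoc]
    congr 1
    rw [← mul_assoc, c2.eq, mul_assoc]
  calc hp n i * (xpow n a * (ppow n b * hl n ^ c))
      = (hp n i * xpow n a) * (ppow n b * hl n ^ c) := by rw [mul_assoc]
    _ = (xpow n a * hp n i) * (ppow n b * hl n ^ c)
        + a i • ((xpow n (Function.update a i (a i - 1)) * hl n) * (ppow n b * hl n ^ c)) := by
        rw [hp_xpow, add_mul, smul_mul_assoc]
    _ = xpow n a * (hp n i * ppow n b * hl n ^ c)
        + a i • (xpow n (Function.update a i (a i - 1)) * (ppow n b * (hl n * hl n ^ c))) := by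
        rw [t1, t2]
    _ = xpow n a * (ppow n (Function.update b i (b i + 1)) * hl n ^ c)
        + a i • (xpow n (Function.update a i (a i - 1)) * (ppow n b * hl n ^ (c + 1))) := by
        rw [mul_ppow, ← pow_succ']

/-- The PBW straightening map: sends a commutative monomial to the corresponding
ordered monomial of `H`. -/
noncomputable def sigH : WPol n →ₗ[ℂ] HWeyl n :=
  Finsupp.linearCombination ℂ (monH n) ∘ₗ (AddMonoidAlgebra.coeffLinearEquiv ℂ).toLinearMap

lemma sigH_monomial (d : ((Fin n ⊕ Fin n) ⊕ Unit) →₀ ℕ) (r : ℂ) :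
    sigH n (MvPolynomial.monomial d r) = r • monH n d := by
  rw [sigH, ← MvPolynomial.single_eq_monomial]
  simp [Finsupp.linearCombination_single]

lemma monH_zero : monH n 0 = 1 := by
  have h1 : xpow n (fun i => (0 : ((Fin n ⊕ Fin n) ⊕ Unit) →₀ ℕ) (Sum.inl (Sum.inl i))) = 1 :=
    cpow_zero' _ _ _ (fun j => rfl)
  have h2 : ppow n (fun i => (0 : ((Fin n ⊕ Fin n) ⊕ Unit) →₀ ℕ) (Sum.inl (Sum.inr i))) = 1 :=
    cpow_zero' _ _ _ (fun j => rfl)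
  rw [monH, h1, h2]
  simp

lemma sigH_one : sigH n 1 = 1 := by
  rw [show (1 : WPol n) = MvPolynomial.monomial 0 1 by
      rw [MvPolynomial.monomial_zero', MvPolynomial.C_1],
    sigH_monomial, monH_zero, one_smul]

lemma sig_gen_hx (i : Fin n) (f : WPol n) :
    sigH n (wrep n (hx n i) f) = hx n i * sigH n f := by
  induction f using MvPolynomial.induction_on' with
  | monomial d r =>
    rw [wrep_hx, LinearMap.mulLeft_apply,
      show (X (Sum.inl (Sum.inl i)) : WPol n) * MvPolynomial.monomial d r
        = MvPolynomial.monomial (d + Finsupp.single (Sum.inl (Sum.inl i)) 1) r by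
          rw [MvPolynomial.X, MvPolynomial.monomial_mul, one_mul, add_comm],
      sigH_monomial, sigH_monomial, mul_smul_comm, hx_mul_monH]
  | add p q h1 h2 => rw [map_add, map_add, map_add, mul_add, h1, h2]

lemma sig_gen_hl (f : WPol n) :
    sigH n (wrep n (hl n) f) = hl n * sigH n f := by
  induction f using MvPolynomial.induction_on' with
  | monomial d r =>
    rw [wrep_hl, LinearMap.mulLeft_apply,
      show (X (Sum.inr ()) : WPol n) * MvPolynomial.monomial d r
        = MvPolynomial.monomial (d + Finsupp.single (Sum.inr ()) 1) r by
          rw [MvPolynomial.X, MvPolynomial.monomial_mul, one_mul, add_comm],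
      sigH_monomial, sigH_monomial, mul_smul_comm, hl_mul_monH]
  | add p q h1 h2 => rw [map_add, map_add, map_add, mul_add, h1, h2]

lemma sig_gen_hp (i : Fin n) (f : WPol n) :
    sigH n (wrep n (hp n i) f) = hp n i * sigH n f := by
  induction f using MvPolynomial.induction_on' with
  | monomial d r =>
    rw [wrep_hp, LinearMap.add_apply, LinearMap.mulLeft_apply, LinearMap.comp_apply,
      Derivation.coeFn_coe, MvPolynomial.pderiv_monomial, LinearMap.mulLeft_apply,
      show (X (Sum.inl (Sum.inr i)) : WPol n) * MvPolynomial.monomial d r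
        = MvPolynomial.monomial (d + Finsupp.single (Sum.inl (Sum.inr i)) 1) r by
          rw [MvPolynomial.X, MvPolynomial.monomial_mul, one_mul, add_comm],
      show (X (Sum.inr ()) : WPol n)
            * MvPolynomial.monomial (d - Finsupp.single (Sum.inl (Sum.inl i)) 1)
              (r * (d (Sum.inl (Sum.inl i)) : ℂ))
        = MvPolynomial.monomial (d - Finsupp.single (Sum.inl (Sum.inl i)) 1
              + Finsupp.single (Sum.inr ()) 1) (r * (d (Sum.inl (Sum.inl i)) : ℂ)) by
          rw [MvPolynomial.X, MvPolynomial.monomial_mul, one_mul, add_comm],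
      map_add, sigH_monomial, sigH_monomial, sigH_monomial, mul_smul_comm,
      hp_mul_monH, smul_add, mul_smul, Nat.cast_smul_eq_nsmul]
  | add p q h1 h2 => rw [map_add, map_add, map_add, mul_add, h1, h2]

lemma sig_rep (z : FreeAlgebra ℂ ((Fin n ⊕ Fin n) ⊕ Unit)) (f : WPol n) :
    sigH n (wrep n (RingQuot.mkAlgHom ℂ (WeylRel n) z) f)
      = RingQuot.mkAlgHom ℂ (WeylRel n) z * sigH n f := by
  induction z using FreeAlgebra.induction generalizing f with
  | grade0 r =>
    rw [AlgHom.commutes, AlgHom.commutes, Module.algebraMap_end_apply, map_smul,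
      Algebra.smul_def]
  | grade1 v =>
    rcases v with (i | i) | u
    · exact sig_gen_hx n i f
    · exact sig_gen_hp n i f
    · cases u; exact sig_gen_hl n f
  | mul x y hx hy =>
    rw [map_mul, map_mul, Module.End.mul_apply, hx, hy, mul_assoc]
  | add x y hx hy =>
    rw [map_add, map_add, LinearMap.add_apply, map_add, hx, hy, add_mul]

lemma sig_wev (h : HWeyl n) : sigH n (wrep n h 1) = h := by
  obtain ⟨z, rfl⟩ := RingQuot.mkAlgHom_surjective ℂ (WeylRel n) h
  rw [sig_rep, sigH_one, mul_one]

end WeylFlatAux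

/-- Property (3) of the canonical family `Q_{𝔸¹}Ω_{𝔸ⁿ}` (Section 5.2): no nonzero
element of the homogenized Weyl algebra `H` is annihilated, from the left or from
the right, by a nonzero polynomial in the central element `ƛ`; i.e. the family is
flat over `𝔸¹ = Spec ℂ[λ]`. -/
theorem stmt_11 (n : ℕ) (hn : 0 < n) (q : Polynomial ℂ) (hq : q ≠ 0) (h : HWeyl n)
    (hh : Polynomial.aeval (hl n) q * h = 0 ∨ h * Polynomial.aeval (hl n) q = 0) :
    h = 0 := by
  classical
  have hcent : ∀ (r : Polynomial ℂ) (g : HWeyl n), Commute (Polynomial.aeval (hl n) r) g := by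
    intro r g
    induction r using Polynomial.induction_on with
    | C a => rw [Polynomial.aeval_C]; exact Algebra.commutes a g
    | add p s hp hs => rw [map_add]; exact hp.add_left hs
    | monomial k a _ =>
      rw [map_mul, map_pow, Polynomial.aeval_C, Polynomial.aeval_X]
      exact (show Commute ((algebraMap ℂ (HWeyl n)) a) g from Algebra.commutes a g).mul_left
        ((hl_central n g).pow_left _)
  have hleft : Polynomial.aeval (hl n) q * h = 0 := by
    rcases hh with h1 | h1
    · exact h1
    · rw [(hcent q h).eq]; exact h1
  have e1 : wrep n (Polynomial.aeval (hl n) q) (wrep n h 1) = 0 := by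
    rw [← Module.End.mul_apply, ← map_mul, hleft, map_zero, LinearMap.zero_apply]
  have e2 : wrep n (Polynomial.aeval (hl n) q)
      = Algebra.lmul ℂ (WPol n)
          (Polynomial.aeval (MvPolynomial.X (Sum.inr ()) : WPol n) q) := by
    rw [← Polynomial.aeval_algHom_apply (wrep n) (hl n) q, wrep_hl,
      show LinearMap.mulLeft ℂ (MvPolynomial.X (Sum.inr ()) : WPol n)
          = Algebra.lmul ℂ (WPol n) (MvPolynomial.X (Sum.inr ())) from by
        ext m
        simp [LinearMap.mulLeft_apply, Algebra.coe_lmul_eq_mul, LinearMap.mul_apply'],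
      Polynomial.aeval_algHom_apply]
  have e3 : (Polynomial.aeval (MvPolynomial.X (Sum.inr ()) : WPol n) q) * (wrep n h 1) = 0 := by
    have h5 := e1
    rw [e2] at h5
    simpa [Algebra.coe_lmul_eq_mul, LinearMap.mul_apply'] using h5
  have hQ : (Polynomial.aeval (MvPolynomial.X (Sum.inr ()) : WPol n) q) ≠ 0 := by
    intro h0
    apply hq
    have h1 := congrArg (MvPolynomial.aeval
      (Sum.elim (fun _ => (0 : Polynomial ℂ)) (fun _ => Polynomial.X))) h0
    rw [map_zero, ← Polynomial.aeval_algHom_apply, MvPolynomial.aeval_X] at h1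
    simpa using h1
  have h4 : wrep n h 1 = 0 := by
    rcases mul_eq_zero.mp e3 with h0 | h0
    · exact absurd h0 hQ
    · exact h0
  rw [← sig_wev n h, h4, map_zero]
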